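/- Let U ⊂ ℂ be an open neighborhood of 0 and let h : U → ℝ be a C¹-smooth function. Fix an integer k ≥ 3 and μ > 0. Suppose h_z(ζ) = −2iμ·ζ̄·|ζ|^{2k−4} + o(|ζ|^{2k−3}) as ζ → 0, where h_z = (1/2)(h_x − i h_y). Then for all sufficiently small σ > 0, the integral ∫₀^{2π} 2·Re[h_z(σe^{it})·(iσe^{it})] dt is strictly positive; in particular it is nonzero, contradicting ∫_γ dh = 0 for the closed curve γ(t) = σe^{it}. -/

import Mathlib

open scoped Real

/-- The Wirtinger derivative `h_z = (1/2)(h_x − i h_y)` of a real-valued function. -/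
noncomputable def wirtingerDz (h : ℂ → ℝ) (ζ : ℂ) : ℂ :=
  (1 / 2 : ℂ) * ((fderiv ℝ h ζ 1 : ℝ) - Complex.I * (fderiv ℝ h ζ Complex.I : ℝ))

theorem loop_integral_of_dh_positive (U : Set ℂ) (hU : IsOpen U) (h0U : (0 : ℂ) ∈ U)
    (h : ℂ → ℝ) (hh : ContDiffOn ℝ 1 h U) (k : ℕ) (hk : 3 ≤ k) (μ : ℝ) (hμ : 0 < μ)
    (hasymp : (fun ζ : ℂ =>
        wirtingerDz h ζ - (-2 * Complex.I * μ * (starRingEnd ℂ ζ) * ‖ζ‖ ^ (2 * k - 4)))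
      =o[nhds 0] (fun ζ : ℂ => ‖ζ‖ ^ (2 * k - 3))) :
    ∃ σ₀ > 0, ∀ σ : ℝ, 0 < σ → σ < σ₀ →
      0 < ∫ t in (0 : ℝ)..(2 * π),
        2 * (wirtingerDz h (σ * Complex.exp (t * Complex.I))
              * (Complex.I * σ * Complex.exp (t * Complex.I))).re := by
  -- continuity of wirtingerDz on U
  have hcont : ContinuousOn (wirtingerDz h) U := by
    have hf : ContinuousOn (fderiv ℝ h) U := hh.continuousOn_fderiv_of_isOpen hU le_rfl
    have h1 : ContinuousOn (fun ζ => ((fderiv ℝ h ζ 1 : ℝ) : ℂ)) U :=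
      Complex.continuous_ofReal.comp_continuousOn (hf.clm_apply continuousOn_const)
    have h2 : ContinuousOn (fun ζ => ((fderiv ℝ h ζ Complex.I : ℝ) : ℂ)) U :=
      Complex.continuous_ofReal.comp_continuousOn (hf.clm_apply continuousOn_const)
    exact continuousOn_const.mul (h1.sub (continuousOn_const.mul h2))
  -- ball inside U
  obtain ⟨r, hr, hrU⟩ := Metric.isOpen_iff.mp hU 0 h0U
  -- little-o bound with ε = μ
  have hev := hasymp.def hμ
  rw [Metric.eventually_nhds_iff] at hev
  obtain ⟨δ, hδ, hδbd⟩ := hev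
  refine ⟨min r δ, lt_min hr hδ, fun σ hσ hσlt => ?_⟩
  have hσr : σ < r := lt_of_lt_of_le hσlt (min_le_left _ _)
  have hσδ : σ < δ := lt_of_lt_of_le hσlt (min_le_right _ _)
  set γ : ℝ → ℂ := fun t => σ * Complex.exp (t * Complex.I) with hγ
  have habsγ : ∀ t, ‖γ t‖ = σ := by
    intro t
    simp [hγ, Complex.norm_exp_ofReal_mul_I, abs_of_pos hσ]
  have hmemU : ∀ t, γ t ∈ U := by
    intro t
    apply hrU
    simp [Metric.mem_ball, Complex.dist_eq, habsγ, hσr]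
  -- pointwise positivity
  have hpt : ∀ t : ℝ, 0 < 2 * (wirtingerDz h (γ t) * (Complex.I * σ * Complex.exp (t * Complex.I))).re := by
    intro t
    set ζ := γ t with hζ
    have habs : ‖ζ‖ = σ := habsγ t
    set c : ℂ := -2 * Complex.I * μ * (starRingEnd ℂ ζ) * ‖ζ‖ ^ (2 * k - 4) with hc
    have herr : ‖wirtingerDz h ζ - c‖ ≤ μ * σ ^ (2 * k - 3) := by
      have h0 := hδbd (y := ζ) (by simp [Complex.dist_eq, habs, hσδ])
      rw [hc, habs]
      rwa [Real.norm_eq_abs, abs_of_nonneg (pow_nonneg (norm_nonneg ζ) _), habs] at h0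
    set v := Complex.I * (σ : ℂ) * Complex.exp ((t : ℂ) * Complex.I) with hvdef
    have hv : v = Complex.I * ζ := by
      rw [hvdef, hζ, hγ]; ring
    have hcv : c * v = ((2 * μ * σ ^ (2 * k - 2) : ℝ) : ℂ) := by
      rw [hv, hc]
      have hconj : (starRingEnd ℂ) ζ * ζ = ((σ ^ 2 : ℝ) : ℂ) := by
        rw [mul_comm, Complex.mul_conj, Complex.normSq_eq_norm_sq, habs]
      have : -2 * Complex.I * μ * (starRingEnd ℂ) ζ * ‖ζ‖ ^ (2 * k - 4) * (Complex.I * ζ)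
          = (-2 * Complex.I * Complex.I) * μ * ((starRingEnd ℂ) ζ * ζ) * ‖ζ‖ ^ (2 * k - 4) := by
        ring
      rw [this, hconj, habs]
      have hIsq : -2 * Complex.I * Complex.I = 2 := by
        rw [mul_assoc, Complex.I_mul_I]; ring
      rw [hIsq]
      have hpow : (σ : ℂ) ^ 2 * (σ : ℂ) ^ (2 * k - 4) = (σ : ℂ) ^ (2 * k - 2) := by
        rw [← pow_add]
        congr 1
        omega
      push_cast
      rw [show (2 : ℂ) * μ * (σ : ℂ) ^ 2 * (σ : ℂ) ^ (2 * k - 4)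
          = 2 * μ * ((σ : ℂ) ^ 2 * (σ : ℂ) ^ (2 * k - 4)) by ring, hpow]
    have hvabs : ‖v‖ = σ := by
      rw [hv]
      simp [habs]
    have hsplit : (wirtingerDz h ζ * v).re
        = ((wirtingerDz h ζ - c) * v).re + (c * v).re := by
      rw [← Complex.add_re]; ring_nf
    have hcre : (c * v).re = 2 * μ * σ ^ (2 * k - 2) := by
      rw [hcv, Complex.ofReal_re]
    have hlow : -(μ * σ ^ (2 * k - 2)) ≤ ((wirtingerDz h ζ - c) * v).re := by
      have h1 : |((wirtingerDz h ζ - c) * v).re| ≤ ‖(wirtingerDz h ζ - c) * v‖ :=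
        Complex.abs_re_le_norm _
      have h2 : ‖(wirtingerDz h ζ - c) * v‖ ≤ μ * σ ^ (2 * k - 3) * σ := by
        rw [norm_mul, hvabs]
        exact mul_le_mul_of_nonneg_right herr hσ.le
      have h3 : μ * σ ^ (2 * k - 3) * σ = μ * σ ^ (2 * k - 2) := by
        rw [mul_assoc, ← pow_succ]
        congr 2
        omega
      nlinarith [neg_abs_le ((wirtingerDz h ζ - c) * v).re]
    have hpos : 0 < σ ^ (2 * k - 2) := pow_pos hσ _
    rw [hsplit, hcre]
    nlinarith
  -- integrability
  have hcint : Continuous fun t : ℝ =>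
      2 * (wirtingerDz h (γ t) * (Complex.I * σ * Complex.exp (t * Complex.I))).re := by
    have hγc : Continuous γ := by
      apply continuous_const.mul
      exact Complex.continuous_exp.comp (Complex.continuous_ofReal.mul continuous_const)
    have hw : Continuous fun t => wirtingerDz h (γ t) :=
      hcont.comp_continuous hγc hmemU
    have hvc : Continuous fun t : ℝ => Complex.I * σ * Complex.exp (t * Complex.I) := by
      apply continuous_const.mul
      exact Complex.continuous_exp.comp (Complex.continuous_ofReal.mul continuous_const)
    exact continuous_const.mul (Complex.continuous_re.comp (hw.mul hvc))
  have h2pi : (0 : ℝ) < 2 * π := by positivity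
  exact intervalIntegral.intervalIntegral_pos_of_pos_on
    (hcint.intervalIntegrable 0 (2 * π)) (fun t _ => hpt t) h2pi
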